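/- For the glued-trees graph G_n' (two balanced binary trees of height n joined by a cycle alternating between the leaves), the column subspace spanned by the normalized uniform superpositions |col j⟩ = (1/√N_j) Σ_{a ∈ column j} |a⟩ (where N_j = 2^j for 0 ≤ j ≤ n and N_j = 2^{2n+1−j} for n+1 ≤ j ≤ 2n+1) is invariant under the adjacency matrix A of G_n'. Moreover ⟨col j| A |col(j+1)⟩ = √2 for 0 ≤ j ≤ n−1 and n+1 ≤ j ≤ 2n, and ⟨col n| A |col(n+1)⟩ = 2. -/

import Mathlib

attribute [local instance] Classical.propDecidable

/-- forward degree of a vertex in column `k`. -/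
def fwdDeg (n k : ℕ) : ℕ := if k ≤ n then 2 else if k ≤ 2 * n then 1 else 0

/-- backward degree of a vertex in column `k`. -/
def bwdDeg (n k : ℕ) : ℕ := if k = 0 then 0 else if k ≤ n then 1 else 2

private lemma sqrtL1 (x : ℝ) (hx : 0 < x) :
    x * 2 / (Real.sqrt x * Real.sqrt (x * 2)) = Real.sqrt 2 := by
  have hs : Real.sqrt x * Real.sqrt (x * 2) = x * Real.sqrt 2 := by
    rw [Real.sqrt_mul hx.le, ← mul_assoc, Real.mul_self_sqrt hx.le]
  have h2 : Real.sqrt 2 * Real.sqrt 2 = 2 := Real.mul_self_sqrt (by norm_num)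
  rw [hs, div_eq_iff (by positivity)]
  linear_combination (-x) * h2

private lemma sqrtL2 (x : ℝ) (hx : 0 < x) :
    x * 2 * 1 / (Real.sqrt (x * 2) * Real.sqrt x) = Real.sqrt 2 := by
  have hs : Real.sqrt (x * 2) * Real.sqrt x = x * Real.sqrt 2 := by
    rw [Real.sqrt_mul hx.le,
      show Real.sqrt x * Real.sqrt 2 * Real.sqrt x
        = Real.sqrt x * Real.sqrt x * Real.sqrt 2 by ring, Real.mul_self_sqrt hx.le]
  have h2 : Real.sqrt 2 * Real.sqrt 2 = 2 := Real.mul_self_sqrt (by norm_num)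
  rw [hs, div_eq_iff (by positivity)]
  linear_combination (-x) * h2

private lemma sqrtL3 (x : ℝ) (hx : 0 < x) :
    x * 2 / (Real.sqrt x * Real.sqrt x) = 2 := by
  rw [Real.mul_self_sqrt hx.le, mul_comm, mul_div_assoc, div_self hx.ne', mul_one]

/-- The column subspace of the glued-trees graph `G_n'` is invariant under the
adjacency matrix `A`, and the reduced matrix elements are
`⟨col j|A|col(j+1)⟩ = √2` for `0 ≤ j ≤ n−1` and `n+1 ≤ j ≤ 2n`, and
`⟨col n|A|col(n+1)⟩ = 2`.  The graph structure is encoded by the column function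
`col`, the column sizes `Nsz j` (`2^j` on the left, `2^{2n+1−j}` on the right), and
the forward/backward degree conditions between adjacent columns. -/
theorem column_subspace_invariant (n : ℕ) (hn : 1 ≤ n)
    (V : Type*) [Fintype V]
    (A : Matrix V V ℝ) (col : V → ℕ)
    (Nsz : ℕ → ℕ) (hNsz : ∀ j, Nsz j = if j ≤ n then 2 ^ j else 2 ^ (2 * n + 1 - j))
    (colvec : ℕ → V → ℝ)
    (hcolvec : ∀ j u, colvec j u = if col u = j then 1 / Real.sqrt (Nsz j) else 0)
    (hcol : ∀ u, col u ≤ 2 * n + 1)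
    (hsym : A.IsSymm)
    (h01 : ∀ u w, A u w = 0 ∨ A u w = 1)
    (hadj : ∀ u w, A u w = 1 → col w = col u + 1 ∨ col u = col w + 1)
    (hcard : ∀ j, j ≤ 2 * n + 1 → (Finset.univ.filter fun u => col u = j).card = Nsz j)
    (hfwd2 : ∀ u, col u ≤ n →
      (Finset.univ.filter fun w => col w = col u + 1 ∧ A u w = 1).card = 2)
    (hfwd1 : ∀ u, n + 1 ≤ col u → col u ≤ 2 * n →
      (Finset.univ.filter fun w => col w = col u + 1 ∧ A u w = 1).card = 1)
    (hbwd1 : ∀ u, 1 ≤ col u → col u ≤ n →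
      (Finset.univ.filter fun w => col w + 1 = col u ∧ A u w = 1).card = 1)
    (hbwd2 : ∀ u, n + 1 ≤ col u → col u ≤ 2 * n + 1 →
      (Finset.univ.filter fun w => col w + 1 = col u ∧ A u w = 1).card = 2) :
    (∀ j, A.mulVec (colvec j) ∈ Submodule.span ℝ (Set.range colvec))
    ∧ (∀ j, j + 1 ≤ n ∨ (n + 1 ≤ j ∧ j ≤ 2 * n) →
        dotProduct (colvec j) (A.mulVec (colvec (j + 1))) = Real.sqrt 2)
    ∧ dotProduct (colvec n) (A.mulVec (colvec (n + 1))) = 2 := by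
  -- Step 1: (A |col j⟩)(u) = (#neighbors of u in column j) / √Nj
  have key : ∀ u j, A.mulVec (colvec j) u
      = ((Finset.univ.filter fun w => col w = j ∧ A u w = 1).card : ℝ)
        * (1 / Real.sqrt (Nsz j)) := by
    intro u j
    simp only [Matrix.mulVec, dotProduct]
    have hterm : ∀ w, A u w * colvec j w
        = if (col w = j ∧ A u w = 1) then 1 / Real.sqrt (Nsz j) else 0 := by
      intro w
      rcases h01 u w with h | h
      · simp [h, hcolvec]
      · by_cases hc : col w = j <;> simp [h, hc, hcolvec]
    rw [Finset.sum_congr rfl fun w _ => hterm w, ← Finset.sum_filter,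
      Finset.sum_const, nsmul_eq_mul]
  -- Step 2: the neighbor counts
  have cnt : ∀ u j, (Finset.univ.filter fun w => col w = j ∧ A u w = 1).card
      = if col u + 1 = j then fwdDeg n (col u)
        else if col u = j + 1 then bwdDeg n (col u) else 0 := by
    intro u j
    by_cases h1 : col u + 1 = j
    · subst h1
      rw [if_pos rfl]
      by_cases hle : col u ≤ n
      · rw [hfwd2 u hle, fwdDeg, if_pos hle]
      · by_cases hle2 : col u ≤ 2 * n
        · rw [hfwd1 u (by omega) hle2, fwdDeg, if_neg hle, if_pos hle2]
        · have hemp : (Finset.univ.filter fun w => col w = col u + 1 ∧ A u w = 1) = ∅ := by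
            rw [Finset.filter_eq_empty_iff]
            rintro w - ⟨hw, -⟩
            have := hcol w
            have := hcol u
            omega
          rw [hemp, Finset.card_empty, fwdDeg, if_neg hle, if_neg hle2]
    · rw [if_neg h1]
      by_cases h2 : col u = j + 1
      · rw [if_pos h2]
        have hfe : (Finset.univ.filter fun w => col w = j ∧ A u w = 1)
            = (Finset.univ.filter fun w => col w + 1 = col u ∧ A u w = 1) := by
          apply Finset.filter_congr
          intro w _
          constructor
          · rintro ⟨h, h'⟩; exact ⟨by omega, h'⟩
          · rintro ⟨h, h'⟩; exact ⟨by omega, h'⟩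
        rw [hfe]
        by_cases hle : col u ≤ n
        · rw [hbwd1 u (by omega) hle, bwdDeg, if_neg (by omega), if_pos hle]
        · rw [hbwd2 u (by omega) (hcol u), bwdDeg, if_neg (by omega), if_neg hle]
      · rw [if_neg h2]
        rw [Finset.card_eq_zero, Finset.filter_eq_empty_iff]
        rintro w - ⟨hw, hA⟩
        rcases hadj u w hA with h | h <;> omega
  -- Step 3: pointwise formula depending only on the column of u
  have mulcol : ∀ j u, A.mulVec (colvec j) u
      = (if col u + 1 = j then (fwdDeg n (col u) : ℝ)
         else if col u = j + 1 then (bwdDeg n (col u) : ℝ) else 0)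
        / Real.sqrt (Nsz j) := by
    intro j u
    rw [key, cnt]
    split_ifs <;> push_cast <;> ring
  have hNpos : ∀ j, 0 < Nsz j := by
    intro j
    rw [hNsz]
    split <;> positivity
  -- Step 4: any function of the column is in the span
  have span_mem : ∀ g : ℕ → ℝ,
      (fun u => g (col u)) ∈ Submodule.span ℝ (Set.range colvec) := by
    intro g
    have hrepr : (fun u => g (col u))
        = ∑ j ∈ Finset.range (2 * n + 2), (g j * Real.sqrt (Nsz j)) • colvec j := by
      funext u
      rw [Finset.sum_apply, Finset.sum_eq_single (col u)]
      · have hpos : (0 : ℝ) < Real.sqrt (Nsz (col u)) :=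
          Real.sqrt_pos.mpr (by exact_mod_cast hNpos (col u))
        rw [Pi.smul_apply, hcolvec, if_pos rfl, smul_eq_mul]
        field_simp
      · intro b _ hb
        rw [Pi.smul_apply, hcolvec, if_neg (fun h => hb h.symm), smul_zero]
      · intro h
        exact absurd (Finset.mem_range.mpr (by have := hcol u; omega)) h
    rw [hrepr]
    exact Submodule.sum_mem _ fun j _ =>
      Submodule.smul_mem _ _ (Submodule.subset_span ⟨j, rfl⟩)
  -- Step 5: dot product formula
  have dp : ∀ j, j ≤ 2 * n →
      dotProduct (colvec j) (A.mulVec (colvec (j + 1)))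
        = (Nsz j : ℝ) * (fwdDeg n j : ℝ)
          / (Real.sqrt (Nsz j) * Real.sqrt (Nsz (j + 1))) := by
    intro j hj
    have hterm : ∀ u, colvec j u * A.mulVec (colvec (j + 1)) u
        = if col u = j then (fwdDeg n j : ℝ)
            / (Real.sqrt (Nsz j) * Real.sqrt (Nsz (j + 1))) else 0 := by
      intro u
      by_cases h : col u = j
      · subst h
        rw [hcolvec, mulcol, if_pos rfl, if_pos rfl, if_pos rfl]
        ring
      · rw [hcolvec, if_neg h, zero_mul, if_neg h]
    simp only [dotProduct]
    rw [Finset.sum_congr rfl fun u _ => hterm u, ← Finset.sum_filter,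
      Finset.sum_const, nsmul_eq_mul, hcard j (by omega)]
    ring
  refine ⟨?_, ?_, ?_⟩
  · -- invariance
    intro j
    have : A.mulVec (colvec j)
        = fun u => (fun k => (if k + 1 = j then (fwdDeg n k : ℝ)
            else if k = j + 1 then (bwdDeg n k : ℝ) else 0)
            / Real.sqrt (Nsz j)) (col u) := funext (mulcol j)
    rw [this]
    exact span_mem (fun k => (if k + 1 = j then (fwdDeg n k : ℝ)
      else if k = j + 1 then (bwdDeg n k : ℝ) else 0) / Real.sqrt (Nsz j))
  · -- √2 matrix elements
    intro j hj
    rcases hj with hj | ⟨hj1, hj2⟩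
    · -- left tree:  Nsz j = 2^j, Nsz (j+1) = 2^j * 2, fwd = 2
      rw [dp j (by omega)]
      have e1 : Nsz j = 2 ^ j := by rw [hNsz]; exact if_pos (by omega)
      have e2 : Nsz (j + 1) = 2 ^ j * 2 := by
        rw [hNsz, if_pos (by omega : j + 1 ≤ n), pow_succ]
      have e3 : fwdDeg n j = 2 := by rw [fwdDeg, if_pos (by omega)]
      rw [e1, e2, e3]
      push_cast
      exact sqrtL1 _ (by positivity)
    · -- right tree:  Nsz j = 2^(2n-j) * 2, Nsz (j+1) = 2^(2n-j), fwd = 1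
      rw [dp j hj2]
      have e1 : Nsz j = 2 ^ (2 * n - j) * 2 := by
        rw [hNsz, if_neg (by omega), show 2 * n + 1 - j = (2 * n - j) + 1 by omega,
          pow_succ]
      have e2 : Nsz (j + 1) = 2 ^ (2 * n - j) := by
        rw [hNsz, if_neg (by omega), show 2 * n + 1 - (j + 1) = 2 * n - j by omega]
      have e3 : fwdDeg n j = 1 := by rw [fwdDeg, if_neg (by omega), if_pos hj2]
      rw [e1, e2, e3]
      push_cast
      exact sqrtL2 _ (by positivity)
  · -- middle: Nsz n = Nsz (n+1) = 2^n, fwd = 2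
    rw [dp n (by omega)]
    have e1 : Nsz n = 2 ^ n := by rw [hNsz]; exact if_pos le_rfl
    have e2 : Nsz (n + 1) = 2 ^ n := by
      rw [hNsz, if_neg (by omega), show 2 * n + 1 - (n + 1) = n by omega]
    have e3 : fwdDeg n n = 2 := by rw [fwdDeg, if_pos le_rfl]
    rw [e1, e2, e3]
    push_cast
    exact sqrtL3 _ (by positivity)
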